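/- Theorem 1(a): Let θ_i* ∈ ℝ^m and let (θ_i^k) be generated by θ_i^{k+1} = P_{θ_i^k}^{k+1}(η·∇ℓ(θ_i^k)) with loss ℓ(θ) = (1/2)‖y_i^{k+1} − ⟨ξ_i^k, θ⟩‖² where y_i^{k+1} = ⟨ξ_i^k, θ_i*⟩ (noise-free). Suppose ‖ξ_i^k‖_*² ≤ c_s for all k and the fixed step-size η satisfies η − (η²/(2ν))c_s > ε for some ε > 0, where ν is the strong convexity modulus of the distance-generating function. Then V_k(θ_i*) := V(θ_i^k, θ_i*) is nonincreasing (hence converges) and lim_{k→∞} ‖⟨ξ_i^k, θ_i* − θ_i^k⟩‖² = 0. -/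

import Mathlib

open RealInnerProductSpace Filter Topology

section helpers

variable {E : Type*} [NormedAddCommGroup E] [InnerProductSpace ℝ E] [CompleteSpace E]

private lemma slope_tendsto {q : ℝ → ℝ} {d : ℝ} (hq : HasDerivAt q d 0) :
    Tendsto (fun t => (q t - q 0) / t) (𝓝[>] 0) (𝓝 d) := by
  have h1 : Tendsto (slope q 0) (𝓝[>] 0) (𝓝 d) :=
    (hasDerivAt_iff_tendsto_slope.mp hq).mono_left
      (nhdsWithin_mono 0 fun x hx => ne_of_gt hx)
  refine h1.congr fun t => ?_
  rw [slope_def_field, sub_zero]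

private lemma slope_ge_limit {q : ℝ → ℝ} {d r : ℝ} (hq : HasDerivAt q d 0)
    (h : ∀ t ∈ Set.Ioc (0:ℝ) 1, r ≤ (q t - q 0) / t) : r ≤ d := by
  refine ge_of_tendsto (slope_tendsto hq) ?_
  filter_upwards [Ioc_mem_nhdsGT_of_mem (Set.left_mem_Ico.mpr one_pos)] with t ht
  exact h t ht

private lemma slope_le_limit {q : ℝ → ℝ} {d r : ℝ} (hq : HasDerivAt q d 0)
    (h : ∀ t ∈ Set.Ioc (0:ℝ) 1, (q t - q 0) / t ≤ r) : d ≤ r := by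
  refine le_of_tendsto (slope_tendsto hq) ?_
  filter_upwards [Ioc_mem_nhdsGT_of_mem (Set.left_mem_Ico.mpr one_pos)] with t ht
  exact h t ht

private lemma hasDerivAt_line {β : E → ℝ} {g : E} (c v : E) {t₀ : ℝ}
    (h : HasGradientAt β g (c + t₀ • v)) :
    HasDerivAt (fun t : ℝ => β (c + t • v)) ⟪g, v⟫ t₀ := by
  have hL : HasDerivAt (fun t : ℝ => c + t • v) v t₀ := by
    simpa using ((hasDerivAt_id t₀).smul_const v).const_add c
  have h2 := h.hasFDerivAt.comp_hasDerivAt t₀ hL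
  simp only [Function.comp_def, InnerProductSpace.toDual_apply_apply] at h2
  exact h2

private lemma amgm_step {ν t A NsV Q W cs es : ℝ} (hν : 0 < ν) (ht : 0 < t)
    (h1 : es * (t * A) ≤ (es * NsV) * Q)
    (hQ : ν * Q ^ 2 ≤ 2 * W * t ^ 2) (hNs : (es * NsV) ^ 2 ≤ es ^ 2 * cs) :
    es * A ≤ es ^ 2 * cs / (2 * ν) + W := by
  have ht2 : (0:ℝ) < t ^ 2 := pow_pos ht 2
  have key : (es * A - W) * (2 * ν) * t ^ 2 ≤ (es ^ 2 * cs) * t ^ 2 := by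
    nlinarith [sq_nonneg (es * NsV * t - ν * Q),
      mul_le_mul_of_nonneg_left h1 (by positivity : (0:ℝ) ≤ 2 * ν * t),
      mul_le_mul_of_nonneg_left hQ hν.le,
      mul_le_mul_of_nonneg_left hNs (sq_nonneg t)]
  have h2 : (es * A - W) * (2 * ν) ≤ es ^ 2 * cs :=
    le_of_mul_le_mul_right (by linarith) ht2
  have h3 : es * A - W ≤ es ^ 2 * cs / (2 * ν) := (le_div_iff₀ (by positivity)).mpr h2
  linarith

/-- Gradient inequality for a convex function. -/
private lemma grad_ineq {T : Set E} {β : E → ℝ} {Dβ : E → E}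
    (hβconv : ConvexOn ℝ T β) {θ u : E} (hθ : θ ∈ T) (hu : u ∈ T)
    (hg : HasGradientAt β (Dβ θ) θ) : ⟪Dβ θ, u - θ⟫ ≤ β u - β θ := by
  have h0 : θ + (0:ℝ) • (u - θ) = θ := by simp
  have hd : HasDerivAt (fun t : ℝ => β (θ + t • (u - θ))) ⟪Dβ θ, u - θ⟫ 0 := by
    exact hasDerivAt_line (β := β) θ (u - θ) (t₀ := (0:ℝ)) (by rw [h0]; exact hg)
  refine slope_le_limit hd ?_
  intro t ht
  have hcomb : θ + t • (u - θ) = (1 - t) • θ + t • u := by module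
  have hcv : β ((1 - t) • θ + t • u) ≤ (1 - t) * β θ + t * β u := by
    simpa using hβconv.2 hθ hu (by linarith [ht.2] : (0:ℝ) ≤ 1 - t) ht.1.le (by ring)
  show (β (θ + t • (u - θ)) - β (θ + (0:ℝ) • (u - θ))) / t ≤ β u - β θ
  rw [div_le_iff₀ ht.1, h0, hcomb]
  nlinarith [hcv]

/-- The key one-step estimate. -/
private lemma step_lemma {T S : Set E} (hST : S ⊆ T) (hconvS : Convex ℝ S)
    (hconvT : Convex ℝ T)
    {β : E → ℝ} {Dβ : E → E} (hgrad : ∀ θ ∈ T, HasGradientAt β (Dβ θ) θ)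
    {ν : ℝ} (hν : 0 < ν) {N Ns : E → ℝ}
    (hpair : ∀ v u, ⟪v, u⟫ ≤ Ns v * N u)
    (hstrong : ∀ θ ∈ T, ∀ θ' ∈ T, ν * N (θ' - θ) ^ 2 ≤ ⟪θ' - θ, Dβ θ' - Dβ θ⟫)
    {V : E → E → ℝ} (hV : ∀ θ₁ θ₂, V θ₁ θ₂ = β θ₂ - β θ₁ - ⟪Dβ θ₁, θ₂ - θ₁⟫)
    {ξ : E} {c_s : ℝ} (hNs : Ns ξ ^ 2 ≤ c_s) {η : ℝ}
    {x w u : E} (hx : x ∈ T) (hw : w ∈ S) (hu : u ∈ S)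
    (hupd : ∀ θ' ∈ S,
      ⟪η • ((⟪ξ, x⟫ - ⟪ξ, u⟫) • ξ), w - x⟫ + V x w
        ≤ ⟪η • ((⟪ξ, x⟫ - ⟪ξ, u⟫) • ξ), θ' - x⟫ + V x θ') :
    V w u ≤ V x u - (η - η ^ 2 / (2 * ν) * c_s) * (⟪ξ, x⟫ - ⟪ξ, u⟫) ^ 2 := by
  have hwT : w ∈ T := hST hw
  have huT : u ∈ T := hST hu
  set s : ℝ := ⟪ξ, x⟫ - ⟪ξ, u⟫ with hs
  have hg : ∀ z : E, ⟪η • (s • ξ), z⟫ = (η * s) * ⟪ξ, z⟫ := by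
    intro z; rw [real_inner_smul_left, real_inner_smul_left]; ring
  -- Step A: variational inequality
  have hVI : ⟪Dβ x, u - w⟫ - ⟪Dβ w, u - w⟫ ≤ (η * s) * ⟪ξ, u - w⟫ := by
    have h0 : w + (0:ℝ) • (u - w) = w := by simp
    have hq0 : HasDerivAt (fun t : ℝ => β (w + t • (u - w))) ⟪Dβ w, u - w⟫ 0 := by
      exact hasDerivAt_line (β := β) w (u - w) (t₀ := (0:ℝ))
        (by rw [h0]; exact hgrad w hwT)
    have hd : ⟪Dβ x, u - w⟫ - (η * s) * ⟪ξ, u - w⟫ ≤ ⟪Dβ w, u - w⟫ := by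
      refine slope_ge_limit hq0 ?_
      intro t ht
      have hmemt : w + t • (u - w) ∈ S := by
        have h2 : w + t • (u - w) = (1 - t) • w + t • u := by module
        rw [h2]; exact hconvS hw hu (by linarith [ht.2]) ht.1.le (by ring)
      have hup := hupd _ hmemt
      rw [hV, hV] at hup
      have e1 : ∀ z : E, ⟪z, (w + t • (u - w)) - x⟫ = ⟪z, w - x⟫ + t * ⟪z, u - w⟫ := by
        intro z
        rw [show (w + t • (u - w)) - x = (w - x) + t • (u - w) by module,
          inner_add_right, real_inner_smul_right]
      rw [e1, e1, hg, hg] at hup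
      show _ ≤ (β (w + t • (u - w)) - β (w + (0:ℝ) • (u - w))) / t
      rw [le_div_iff₀ ht.1, h0]
      nlinarith [hup]
    linarith
  -- Step B: choose a good point on the segment [x, w]
  have hseg : ∀ τ ∈ Set.Icc (0:ℝ) 1, x + τ • (w - x) ∈ T := by
    intro τ hτ
    rw [show x + τ • (w - x) = (1 - τ) • x + τ • w by module]
    exact hconvT hx hwT (by linarith [hτ.2]) hτ.1 (by ring)
  have hB : ∃ t ∈ Set.Ioc (0:ℝ) 1,
      ⟪Dβ (x + t • (w - x)), w - x⟫ - ⟪Dβ x, w - x⟫ ≤ 2 * V x w * t := by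
    by_contra hcon
    push_neg at hcon
    set φ : ℝ → ℝ := fun τ =>
      β (x + τ • (w - x)) - β x - τ * ⟪Dβ x, w - x⟫ - V x w * τ ^ 2 with hφdef
    have hφd : ∀ τ ∈ Set.Icc (0:ℝ) 1, HasDerivAt φ
        (⟪Dβ (x + τ • (w - x)), w - x⟫ - ⟪Dβ x, w - x⟫ - V x w * (2 * τ)) τ := by
      intro τ hτ
      have h1 : HasDerivAt (fun τ : ℝ => β (x + τ • (w - x)))
          ⟪Dβ (x + τ • (w - x)), w - x⟫ τ := hasDerivAt_line x (w - x) (hgrad _ (hseg τ hτ))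
      have h2 : HasDerivAt (fun τ : ℝ => τ * ⟪Dβ x, w - x⟫) ⟪Dβ x, w - x⟫ τ :=
        hasDerivAt_mul_const _
      have h3 : HasDerivAt (fun τ : ℝ => V x w * τ ^ 2) (V x w * (2 * τ)) τ := by
        have := (hasDerivAt_pow 2 τ).const_mul (V x w)
        exact this.congr_deriv (by norm_num)
      exact ((h1.sub_const (β x)).sub h2).sub h3
    have hsm : StrictMonoOn φ (Set.Icc 0 1) := by
      apply strictMonoOn_of_deriv_pos (convex_Icc 0 1)
      · intro τ hτ
        exact (hφd τ hτ).continuousAt.continuousWithinAt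
      · intro τ hτ
        rw [interior_Icc] at hτ
        rw [(hφd τ (Set.Ioo_subset_Icc_self hτ)).deriv]
        have := hcon τ ⟨hτ.1, hτ.2.le⟩
        linarith
    have h01 : φ 0 < φ 1 := hsm (by norm_num) (by norm_num) one_pos
    have hφ0 : φ 0 = 0 := by simp [hφdef]
    have hφ1 : φ 1 = 0 := by
      have hxw : x + (1:ℝ) • (w - x) = w := by module
      simp only [hφdef, hxw, one_pow, one_mul, hV x w]
      ring
    linarith
  obtain ⟨t, ht, hBt⟩ := hB
  set xt : E := x + t • (w - x) with hxt
  have hxtT : xt ∈ T := hseg t ⟨ht.1.le, ht.2⟩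
  have hDt : ⟪xt - x, Dβ xt - Dβ x⟫ ≤ 2 * V x w * t ^ 2 := by
    have h1 : xt - x = t • (w - x) := by rw [hxt]; module
    rw [h1, real_inner_smul_left]
    have h2 : ⟪w - x, Dβ xt - Dβ x⟫ = ⟪Dβ xt, w - x⟫ - ⟪Dβ x, w - x⟫ := by
      rw [inner_sub_right, real_inner_comm (w - x), real_inner_comm (w - x)]
    rw [h2]
    nlinarith [ht.1, hBt]
  -- Step C: Cauchy–Schwarz-type bound with AM–GM
  have hC : (η * s) * ⟪ξ, x - w⟫ ≤ η ^ 2 / (2 * ν) * c_s * s ^ 2 + V x w := by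
    have hxxt : x - xt = t • (x - w) := by rw [hxt]; module
    have hinner : ⟪ξ, x - xt⟫ = t * ⟪ξ, x - w⟫ := by
      rw [hxxt, real_inner_smul_right]
    have key : η * s * ⟪ξ, x - w⟫ ≤ (η * s) ^ 2 * c_s / (2 * ν) + V x w := by
      rcases le_or_gt 0 (η * s) with hsgn | hsgn
      · refine amgm_step (Q := N (x - xt)) (NsV := Ns ξ) hν ht.1 ?_ ?_ ?_
        · have h1 := mul_le_mul_of_nonneg_left (hpair ξ (x - xt)) hsgn
          rw [hinner] at h1
          nlinarith [h1]
        · have h1 := hstrong xt hxtT x hx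
          have he : ⟪x - xt, Dβ x - Dβ xt⟫ = ⟪xt - x, Dβ xt - Dβ x⟫ := by
            rw [show x - xt = -(xt - x) by abel,
              show Dβ x - Dβ xt = -(Dβ xt - Dβ x) by abel, inner_neg_neg]
          rw [he] at h1
          linarith [hDt]
        · nlinarith [hNs, sq_nonneg (η * s)]
      · refine amgm_step (Q := -N (xt - x)) (NsV := Ns ξ) hν ht.1 ?_ ?_ ?_
        · have hi := mul_le_mul_of_nonneg_left (hpair ξ (xt - x))
            (by linarith : (0:ℝ) ≤ -(η * s))
          have hixt : ⟪ξ, xt - x⟫ = -(t * ⟪ξ, x - w⟫) := by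
            rw [show xt - x = -(x - xt) by abel, inner_neg_right, hinner]
          rw [hixt] at hi
          nlinarith [hi]
        · have h1 := hstrong x hx xt hxtT
          rw [neg_sq]
          linarith [hDt]
        · nlinarith [hNs, sq_nonneg (η * s)]
    calc (η * s) * ⟪ξ, x - w⟫ ≤ (η * s) ^ 2 * c_s / (2 * ν) + V x w := key
      _ = η ^ 2 / (2 * ν) * c_s * s ^ 2 + V x w := by ring
  -- Assemble
  have h3pt : V w u = V x u - V x w + (⟪Dβ x, u - w⟫ - ⟪Dβ w, u - w⟫) := by
    simp only [hV, inner_sub_right]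
    ring
  have hsplit : (η * s) * ⟪ξ, u - w⟫ = -(η * s ^ 2) + (η * s) * ⟪ξ, x - w⟫ := by
    have h1 : ⟪ξ, u - w⟫ = -s + ⟪ξ, x - w⟫ := by
      rw [inner_sub_right, inner_sub_right, hs]; ring
    rw [h1]; ring
  clear_value s
  nlinarith [h3pt, hVI, hsplit, hC]

end helpers

/-- Theorem 1(a): in the noise-free case, the utility-learning iterates
`θ^{k+1} = P^{k+1}_{θ^k}(η ∇ℓ(θ^k))` with `∇ℓ(θ^k) = (⟨ξ^k, θ^k⟩ - ⟨ξ^k, θ*⟩) ξ^k`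
(prox-mapping of the ν-strongly convex distance-generating function `β`, over nested
closed convex sets `Θ k` all containing `θ*`), under the stability bound
`‖ξ^k‖_*² ≤ c_s` and step size `η - (η²/(2ν)) c_s > ε > 0`, yield a nonincreasing
(hence convergent) Bregman divergence `V(θ^k, θ*)` and
`‖⟨ξ^k, θ* - θ^k⟩‖² → 0`. -/
theorem utility_learning_noise_free (m : ℕ)
    (Θ : ℕ → Set (EuclideanSpace ℝ (Fin m)))
    (hne : ∀ k, (Θ k).Nonempty) (hclosed : ∀ k, IsClosed (Θ k))
    (hconv : ∀ k, Convex ℝ (Θ k)) (hnested : ∀ k, Θ (k + 1) ⊆ Θ k)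
    (β : EuclideanSpace ℝ (Fin m) → ℝ)
    (Dβ : EuclideanSpace ℝ (Fin m) → EuclideanSpace ℝ (Fin m))
    (hgrad : ∀ θ ∈ Θ 0, HasGradientAt β (Dβ θ) θ)
    (hβconv : ConvexOn ℝ (Θ 0) β)
    (ν : ℝ) (hν : 0 < ν)
    (N Ns : EuclideanSpace ℝ (Fin m) → ℝ)
    (hpair : ∀ v u, ⟪v, u⟫ ≤ Ns v * N u)
    (hstrong : ∀ θ ∈ Θ 0, ∀ θ' ∈ Θ 0, ν * N (θ' - θ) ^ 2 ≤ ⟪θ' - θ, Dβ θ' - Dβ θ⟫)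
    (V : EuclideanSpace ℝ (Fin m) → EuclideanSpace ℝ (Fin m) → ℝ)
    (hV : ∀ θ₁ θ₂, V θ₁ θ₂ = β θ₂ - β θ₁ - ⟪Dβ θ₁, θ₂ - θ₁⟫)
    (θstar : EuclideanSpace ℝ (Fin m)) (hθstar : ∀ k, θstar ∈ Θ k)
    (ξ : ℕ → EuclideanSpace ℝ (Fin m))
    (c_s : ℝ) (hstable : ∀ k, (Ns (ξ k)) ^ 2 ≤ c_s)
    (η ε : ℝ) (hε : 0 < ε) (hstep : η - (η ^ 2 / (2 * ν)) * c_s > ε)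
    (θseq : ℕ → EuclideanSpace ℝ (Fin m)) (hθ0 : θseq 0 ∈ Θ 0)
    (hmem : ∀ k, θseq (k + 1) ∈ Θ (k + 1))
    -- the update is the prox-mapping of the scaled loss gradient
    (hupdate : ∀ k, ∀ θ' ∈ Θ (k + 1),
      ⟪η • ((⟪ξ k, θseq k⟫ - ⟪ξ k, θstar⟫) • ξ k), θseq (k + 1) - θseq k⟫
          + V (θseq k) (θseq (k + 1))
        ≤ ⟪η • ((⟪ξ k, θseq k⟫ - ⟪ξ k, θstar⟫) • ξ k), θ' - θseq k⟫
          + V (θseq k) θ') :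
    (∀ k, V (θseq (k + 1)) θstar ≤ V (θseq k) θstar) ∧
      (∃ L : ℝ, Tendsto (fun k => V (θseq k) θstar) atTop (nhds L)) ∧
      Tendsto (fun k => (⟪ξ k, θstar - θseq k⟫) ^ 2) atTop (nhds 0) := by
  have hsub : ∀ k, Θ k ⊆ Θ 0 := by
    intro k
    induction k with
    | zero => exact subset_rfl
    | succ n ih => exact (hnested n).trans ih
  have hθmem0 : ∀ k, θseq k ∈ Θ 0 := by
    intro k
    cases k with
    | zero => exact hθ0
    | succ n => exact hsub _ (hmem n)
  -- the key one-step inequality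
  have key : ∀ k, V (θseq (k + 1)) θstar + ε * (⟪ξ k, θstar - θseq k⟫) ^ 2
      ≤ V (θseq k) θstar := by
    intro k
    have hstepk := step_lemma (hsub (k + 1)) (hconv (k + 1)) (hconv 0) hgrad hν hpair
      hstrong hV (hstable k) (hθmem0 k) (hmem k) (hθstar (k + 1)) (hupdate k)
    have hsq : (⟪ξ k, θstar - θseq k⟫) ^ 2 = (⟪ξ k, θseq k⟫ - ⟪ξ k, θstar⟫) ^ 2 := by
      rw [inner_sub_right, show (⟪ξ k, θstar⟫ - ⟪ξ k, θseq k⟫ : ℝ)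
        = -(⟪ξ k, θseq k⟫ - ⟪ξ k, θstar⟫) by ring, neg_sq]
    rw [hsq]
    nlinarith [hstepk, sq_nonneg (⟪ξ k, θseq k⟫ - ⟪ξ k, θstar⟫ : ℝ),
      mul_le_mul_of_nonneg_right (le_of_lt hstep)
        (sq_nonneg (⟪ξ k, θseq k⟫ - ⟪ξ k, θstar⟫ : ℝ))]
  have hmono : ∀ k, V (θseq (k + 1)) θstar ≤ V (θseq k) θstar := by
    intro k
    nlinarith [key k, sq_nonneg (⟪ξ k, θstar - θseq k⟫ : ℝ), hε.le,
      mul_nonneg hε.le (sq_nonneg (⟪ξ k, θstar - θseq k⟫ : ℝ))]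
  have hnonneg : ∀ k, 0 ≤ V (θseq k) θstar := by
    intro k
    have := grad_ineq hβconv (hθmem0 k) (hθstar 0) (hgrad _ (hθmem0 k))
    rw [hV]
    linarith
  have hanti : Antitone fun k => V (θseq k) θstar :=
    antitone_nat_of_succ_le hmono
  have hbdd : BddBelow (Set.range fun k => V (θseq k) θstar) := by
    refine ⟨0, ?_⟩
    rintro y ⟨k, rfl⟩
    exact hnonneg k
  have hL : Tendsto (fun k => V (θseq k) θstar) atTop (nhds (⨅ i, V (θseq i) θstar)) :=
    tendsto_atTop_ciInf hanti hbdd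
  refine ⟨hmono, ⟨_, hL⟩, ?_⟩
  -- the squares tend to zero
  have hL1 : Tendsto (fun k => V (θseq (k + 1)) θstar) atTop
      (nhds (⨅ i, V (θseq i) θstar)) := hL.comp (tendsto_add_atTop_nat 1)
  have hdiff : Tendsto (fun k => (V (θseq k) θstar - V (θseq (k + 1)) θstar) / ε)
      atTop (nhds 0) := by
    have := (hL.sub hL1).div_const ε
    simpa using this
  refine squeeze_zero (fun k => sq_nonneg _) (fun k => ?_) hdiff
  rw [le_div_iff₀ hε]
  linarith [key k]
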